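/- arXiv:2104.09110 — 2 statements merged into one kernel-verified Lean document; each statement's English description precedes it below -/
import Mathlib

section
/- Let J be a Euclidean Jordan algebra, c = (c₁,…,c_k) a CSOI, and T an element of the Lie algebra str(J) of the structure group such that T(J(c)) ⊆ J(c). Then T maps each Peirce subalgebra J_j = J(c_j,1) into itself. -/
open scoped RealInnerProductSpace

/-- A Euclidean Jordan algebra structure on a finite-dimensional real inner
product space: a commutative bilinear product satisfying the Jordan identity,
with unit `one`, such that the inner product is associative. -/
structure EJA (J : Type) [NormedAddCommGroup J] [InnerProductSpace ℝ J] : Type where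
  mul : J →ₗ[ℝ] J →ₗ[ℝ] J
  comm : ∀ x y : J, mul x y = mul y x
  jordan : ∀ x y : J, mul (mul x y) (mul x x) = mul x (mul y (mul x x))
  one : J
  one_mul : ∀ x : J, mul one x = x
  assoc_inner : ∀ x y z : J, ⟪mul x y, z⟫ = ⟪y, mul x z⟫

variable {J : Type} [NormedAddCommGroup J] [InnerProductSpace ℝ J] [FiniteDimensional ℝ J]

/-- The Peirce `μ`-eigenspace of the idempotent `c`. -/
noncomputable def EJA.peirce (A : EJA J) (c : J) (μ : ℝ) : Submodule ℝ J :=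
  Module.End.eigenspace (A.mul c : Module.End ℝ J) μ

/-- A complete system of orthogonal idempotents. -/
def EJA.IsCSOI (A : EJA J) {k : ℕ} (c : Fin k → J) : Prop :=
  (∀ j, A.mul (c j) (c j) = c j) ∧ (∀ i j, i ≠ j → A.mul (c i) (c j) = 0) ∧
    (∑ j, c j) = A.one

/-- `y` is the Jordan inverse of `x`:  `x∘y = e` and `x²∘y = x`. -/
def EJA.IsInv (A : EJA J) (x y : J) : Prop :=
  A.mul x y = A.one ∧ A.mul (A.mul x x) y = x

/-- A (Jordan) derivation of `J`. -/
def EJA.IsDer (A : EJA J) (D : J →ₗ[ℝ] J) : Prop :=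
  ∀ x y : J, D (A.mul x y) = A.mul (D x) y + A.mul x (D y)

set_option linter.unusedSectionVars false

/-- Linearized Jordan identity. -/
lemma EJA.lin (A : EJA J) (x z y : J) :
    A.mul (A.mul z y) (A.mul x x) + A.mul (A.mul x y) (A.mul x z) + A.mul (A.mul x y) (A.mul z x)
      = A.mul z (A.mul y (A.mul x x)) + A.mul x (A.mul y (A.mul x z))
          + A.mul x (A.mul y (A.mul z x)) := by
  have h1 := A.jordan (x + z) y
  have h2 := A.jordan (x - z) y
  have h3 := A.jordan z y
  simp only [map_add, map_sub, LinearMap.add_apply, LinearMap.sub_apply] at h1 h2 h3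
  linear_combination (norm := module) (2:ℝ)⁻¹ • (h1 - h2) - h3

/-- If `c` is idempotent and `a ∈ J₁(c)`, then `L(c)` and `L(a)` commute. -/
lemma EJA.comm1 (A : EJA J) {c a : J} (hc : A.mul c c = c) (ha : A.mul c a = a) (y : J) :
    A.mul c (A.mul a y) = A.mul a (A.mul c y) := by
  have h := A.lin c a y
  rw [A.comm a c] at h
  rw [hc, ha] at h
  rw [A.comm (A.mul a y) c, A.comm (A.mul c y) a, A.comm y c, A.comm y a] at h
  linear_combination (norm := module) -h

/-- If `c` is idempotent and `b ∈ J₀(c)`, then `L(c)` and `L(b)` commute. -/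
lemma EJA.comm0 (A : EJA J) {c b : J} (hc : A.mul c c = c) (hb : A.mul c b = 0) (y : J) :
    A.mul c (A.mul b y) = A.mul b (A.mul c y) := by
  have h := A.lin c b y
  rw [A.comm b c] at h
  rw [hc, hb] at h
  simp only [map_zero, LinearMap.zero_apply, add_zero] at h
  rw [A.comm (A.mul b y) c, A.comm y c] at h
  exact h

/-- The Peirce 1- and 0-spaces of an idempotent multiply to zero. -/
lemma EJA.prodzero (A : EJA J) {c a b : J} (hc : A.mul c c = c) (ha : A.mul c a = a)
    (hb : A.mul c b = 0) : A.mul a b = 0 := by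
  have h1 : A.mul c (A.mul a b) = 0 := by
    rw [A.comm1 hc ha b, hb, map_zero]
  have h2 : A.mul c (A.mul b a) = A.mul b a := by
    rw [A.comm0 hc hb a, ha]
  rw [A.comm a b] at h1 ⊢
  rw [← h2, h1]

/-- If `T ∈ str(J) = Der(J) ⊕ {L(v)}` maps `J(c)` into itself, then `T` maps
each Peirce subalgebra `J_j = J(c_j,1)` into itself. -/
theorem stmt5 (A : EJA J) (k : ℕ) (c : Fin k → J) (hc : A.IsCSOI c)
    (T : J →ₗ[ℝ] J)
    (hT : ∃ (D : J →ₗ[ℝ] J) (v : J), A.IsDer D ∧ T = D + A.mul v)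
    (hJc : ∀ x ∈ ⨆ j, A.peirce (c j) 1, T x ∈ ⨆ j, A.peirce (c j) 1) :
    ∀ j, ∀ x ∈ A.peirce (c j) 1, T x ∈ A.peirce (c j) 1 := by
  obtain ⟨hidem, horth, hsum⟩ := hc
  obtain ⟨D, v, hD, hTDv⟩ := hT
  intro j x hx
  have hx1 : A.mul (c j) x = x := by
    have := Module.End.mem_eigenspace_iff.mp hx
    simpa using this
  -- membership of elements of other Peirce spaces
  have hzero : ∀ i, i ≠ j → ∀ w, A.mul (c i) w = w → A.mul x w = 0 := by
    intro i hij w hw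
    have hcjw : A.mul (c j) w = 0 := by
      have h := A.prodzero (hidem i) hw (horth i j hij)
      rw [A.comm w (c j)] at h
      exact h
    exact A.prodzero (hidem j) hx1 hcjw
  have hcix : ∀ i, i ≠ j → A.mul (c i) x = 0 := by
    intro i hij
    have h := A.prodzero (hidem j) hx1 (horth j i (Ne.symm hij))
    rw [A.comm x (c i)] at h
    exact h
  -- the key orthogonality: ⟪T x, w⟫ = 0 for w in J_i, i ≠ j
  have key : ∀ i, i ≠ j → ∀ w, A.mul (c i) w = w → ⟪T x, w⟫ = 0 := by
    intro i hij w hw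
    have hxw : A.mul x w = 0 := hzero i hij w hw
    have hv : ⟪A.mul v x, w⟫ = 0 := by
      rw [A.comm v x, A.assoc_inner, hxw, inner_zero_right]
    have hd : ⟪D x, w⟫ = 0 := by
      have h2 : A.mul (c i) (D x) = - A.mul (D (c i)) x := by
        have h := hD (c i) x
        rw [hcix i hij, map_zero] at h
        linear_combination (norm := module) -h
      calc ⟪D x, w⟫ = ⟪D x, A.mul (c i) w⟫ := by rw [hw]
        _ = ⟪A.mul (c i) (D x), w⟫ := (A.assoc_inner _ _ _).symm
        _ = -⟪A.mul x (D (c i)), w⟫ := by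
            rw [h2, A.comm (D (c i)) x, inner_neg_left]
        _ = 0 := by rw [A.assoc_inner, hxw, inner_zero_right, neg_zero]
    rw [hTDv, LinearMap.add_apply, inner_add_left, hv, hd, add_zero]
  -- decompose T x
  have hTx : T x ∈ ⨆ i, A.peirce (c i) 1 :=
    hJc x (le_iSup (fun i => A.peirce (c i) 1) j hx)
  rw [Submodule.mem_iSup_iff_exists_finsupp] at hTx
  obtain ⟨f, hf, hfsum⟩ := hTx
  have hf1 : ∀ i, A.mul (c i) (f i) = f i := by
    intro i
    have := Module.End.mem_eigenspace_iff.mp (hf i)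
    simpa using this
  have hsum' : ∑ i, f i = T x := by
    rw [← hfsum, Finsupp.sum_fintype]
    intro i; rfl
  -- orthogonality of Peirce spaces: cross inner products vanish
  have horthin : ∀ m i : Fin k, m ≠ i → ⟪f m, f i⟫ = 0 := by
    intro m i hmi
    have h0 : A.mul (f m) (f i) = 0 := by
      have hcmfi : A.mul (c m) (f i) = 0 := by
        have h := A.prodzero (hidem i) (hf1 i) (horth i m (Ne.symm hmi))
        rw [A.comm (f i) (c m)] at h
        exact h
      exact A.prodzero (hidem m) (hf1 m) hcmfi
    calc ⟪f m, f i⟫ = ⟪A.mul (c m) (f m), f i⟫ := by rw [hf1 m]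
      _ = ⟪f m, A.mul (c m) (f i)⟫ := A.assoc_inner _ _ _
      _ = 0 := by
          have hcmfi : A.mul (c m) (f i) = 0 := by
            have h := A.prodzero (hidem i) (hf1 i) (horth i m (Ne.symm hmi))
            rw [A.comm (f i) (c m)] at h
            exact h
          rw [hcmfi, inner_zero_right]
  have hfz : ∀ i, i ≠ j → f i = 0 := by
    intro i hij
    have h0 : ⟪T x, f i⟫ = 0 := key i hij (f i) (hf1 i)
    rw [← hsum', sum_inner] at h0
    rw [Finset.sum_eq_single i (fun m _ hmi => horthin m i hmi) (by simp)] at h0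
    exact inner_self_eq_zero.mp h0
  have hTxj : T x = f j := by
    rw [← hsum', Finset.sum_eq_single j (fun m _ hmj => hfz m hmj) (by simp)]
  rw [hTxj]
  exact hf j
end

section
/- Let J be a Euclidean Jordan algebra with symmetric cone Ω, c = (c₁,…,c_k) a CSOI with Peirce subalgebras J_j and their symmetric cones Ω_j. For x_j ∈ J_j (j = 1,…,k), the element x = x₁ + ⋯ + x_k belongs to Ω if and only if x_j ∈ Ω_j for every j. -/
open scoped RealInnerProductSpace

set_option linter.unusedSectionVars false

variable {J : Type} [NormedAddCommGroup J] [InnerProductSpace ℝ J] [FiniteDimensional ℝ J]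

/-- The symmetric cone `Ω`: the set of squares of invertible elements. -/
def EJA.cone (A : EJA J) : Set J := {z | ∃ x y, A.IsInv x y ∧ z = A.mul x x}

namespace EJA
variable (A : EJA J)

theorem mul_one (x : J) : A.mul x A.one = x := by rw [A.comm, A.one_mul]

/-- The fundamental polarized identity. -/
theorem polar (x z w : J) :
    (2:ℝ) • A.mul (A.mul x w) (A.mul x z) + A.mul (A.mul z w) (A.mul x x) =
    (2:ℝ) • A.mul x (A.mul w (A.mul x z)) + A.mul z (A.mul w (A.mul x x)) := by
  have h1 := A.jordan (x + z) w
  have h2 := A.jordan (x - z) w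
  have h3 := A.jordan z w
  simp only [map_add, map_sub, LinearMap.add_apply, LinearMap.sub_apply] at h1 h2
  rw [A.comm z x] at h1 h2
  linear_combination (norm := module) ((2:ℝ)⁻¹) • (h1 - h2) - h3

theorem commute_of_orth (c d : J) (hc : A.mul c c = c) (hcd : A.mul c d = 0) (a : J) :
    A.mul d (A.mul c a) = A.mul c (A.mul d a) := by
  have h := A.polar c d a
  rw [hcd, hc] at h
  simp only [map_zero, smul_zero, zero_add] at h
  rw [A.comm a c] at h
  rw [A.comm (A.mul d a) c] at h
  exact h.symm

theorem cubic (c : J) (hc : A.mul c c = c) (a : J) :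
    (3:ℝ) • A.mul c (A.mul c a) =
      (2:ℝ) • A.mul c (A.mul c (A.mul c a)) + A.mul c a := by
  have h := A.polar c a c
  simp only [hc] at h
  rw [A.comm a c] at h
  rw [A.comm (A.mul c a) c] at h
  linear_combination (norm := module) h

theorem mul_mem_one (c x y : J) (hc : A.mul c c = c) (hx : A.mul c x = x)
    (hy : A.mul c y = y) : A.mul c (A.mul x y) = A.mul x y := by
  have h := A.polar c x y
  simp only [hc, hx] at h
  rw [A.comm y c] at h
  simp only [hy] at h
  rw [A.comm y x, A.comm (A.mul x y) c] at h
  linear_combination (norm := module) (-1:ℝ) • h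

theorem mul_one_zero (c x y : J) (hc : A.mul c c = c) (hx : A.mul c x = x)
    (hy : A.mul c y = 0) : A.mul x y = 0 := by
  have h1 := A.polar c y x
  have h2 := A.polar c x y
  simp only [hc, hx] at h1 h2
  rw [A.comm x c] at h1
  simp only [hx, hy] at h1 h2
  simp only [map_zero, smul_zero, zero_add, LinearMap.zero_apply] at h1 h2
  rw [A.comm y x, A.comm (A.mul x y) c] at h1
  -- h1 : A.mul c (A.mul x y) = A.mul x y
  rw [A.comm y c] at h2
  simp only [hy, map_zero] at h2
  rw [A.comm (A.mul x y) c] at h2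
  -- h2 : A.mul c (A.mul x y) = 2 • A.mul c (A.mul y x) + 0 ??
  rw [A.comm y x] at h2
  -- combine
  have h3 : A.mul c (A.mul x y) = 0 := by linear_combination (norm := module) -h2
  rw [h3] at h1
  exact h1.symm

theorem mul_orth_zero (c d x : J) (hc : A.mul c c = c) (hd : A.mul d d = d)
    (hcd : A.mul c d = 0) (hx : A.mul c x = x) : A.mul d x = 0 := by
  have hcu : A.mul c (A.mul d x) = A.mul d x := by
    have h := A.commute_of_orth c d hc hcd x
    rw [hx] at h; exact h.symm
  have hcdd : A.mul c (A.mul d (A.mul d x)) = A.mul d (A.mul d x) := by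
    have h := A.commute_of_orth c d hc hcd (A.mul d x)
    rw [hcu] at h; exact h.symm
  have hsum : A.mul (c + d) (c + d) = c + d := by
    have hdc : A.mul d c = 0 := by rw [A.comm]; exact hcd
    simp only [map_add, LinearMap.add_apply, hc, hd, hcd, hdc]
    abel
  have e1 := A.cubic (c + d) hsum x
  have e2 := A.cubic d hd x
  simp only [map_add, LinearMap.add_apply, hx, hcu, hcdd] at e1
  have hdd : A.mul d (A.mul d x) = 0 := by
    linear_combination (norm := module) ((6:ℝ)⁻¹) • (e2 - e1)
  rw [hdd] at e2
  simp only [map_zero, smul_zero, zero_add] at e2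
  exact e2.symm


theorem inner_idem_nonneg (c : J) (hc : A.mul c c = c) (w : J) :
    0 ≤ ⟪A.mul c w, w⟫ ∧ (⟪A.mul c w, w⟫ = 0 → A.mul c w = 0) := by
  set T : J →ₗ[ℝ] J := A.mul c with hT
  have hsym : ∀ u v : J, ⟪T u, v⟫ = ⟪u, T v⟫ := fun u v => A.assoc_inner c u v
  have hsym2 : ∀ u v : J, ⟪T (T u), v⟫ = ⟪u, T (T v)⟫ := fun u v => by rw [hsym, hsym]
  set P1 : J →ₗ[ℝ] J := (2:ℝ) • (T ∘ₗ T) - T with hP1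
  set P2 : J →ₗ[ℝ] J := (4:ℝ) • T - (4:ℝ) • (T ∘ₗ T) with hP2
  have hP1sym : ∀ u v : J, ⟪P1 u, v⟫ = ⟪u, P1 v⟫ := fun u v => by
    simp only [hP1, LinearMap.sub_apply, LinearMap.smul_apply, LinearMap.comp_apply,
      inner_sub_left, inner_sub_right, real_inner_smul_left, real_inner_smul_right,
      hsym u v, hsym2 u v]
  have hP2sym : ∀ u v : J, ⟪P2 u, v⟫ = ⟪u, P2 v⟫ := fun u v => by
    simp only [hP2, LinearMap.sub_apply, LinearMap.smul_apply, LinearMap.comp_apply,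
      inner_sub_left, inner_sub_right, real_inner_smul_left, real_inner_smul_right,
      hsym u v, hsym2 u v]
  have hP1idem : ∀ u : J, P1 (P1 u) = P1 u := fun u => by
    have e1 := A.cubic c hc u
    have e2 := A.cubic c hc (A.mul c u)
    simp only [hP1, LinearMap.sub_apply, LinearMap.smul_apply, LinearMap.comp_apply,
      map_sub, map_smul, hT]
    linear_combination (norm := module) (-1:ℝ) • e1 - (2:ℝ) • e2
  have hP2idem : ∀ u : J, P2 (P2 u) = P2 u := fun u => by
    have e1 := A.cubic c hc u
    have e2 := A.cubic c hc (A.mul c u)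
    simp only [hP2, LinearMap.sub_apply, LinearMap.smul_apply, LinearMap.comp_apply,
      map_sub, map_smul, hT]
    linear_combination (norm := module) (4:ℝ) • e1 - (8:ℝ) • e2
  have hdecomp : T w = P1 w + (2:ℝ)⁻¹ • P2 w := by
    simp only [hP1, hP2, LinearMap.sub_apply, LinearMap.smul_apply, LinearMap.comp_apply]
    module
  have key1 : ⟪P1 w, w⟫ = ⟪P1 w, P1 w⟫ := by
    conv_lhs => rw [← hP1idem w]
    exact hP1sym (P1 w) w
  have key2 : ⟪P2 w, w⟫ = ⟪P2 w, P2 w⟫ := by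
    conv_lhs => rw [← hP2idem w]
    exact hP2sym (P2 w) w
  have main : ⟪A.mul c w, w⟫ = ⟪P1 w, P1 w⟫ + (2:ℝ)⁻¹ * ⟪P2 w, P2 w⟫ := by
    rw [show A.mul c w = T w from rfl, hdecomp, inner_add_left, real_inner_smul_left,
      key1, key2]
  constructor
  · rw [main]
    have := real_inner_self_nonneg (x := P1 w)
    have := real_inner_self_nonneg (x := P2 w)
    nlinarith
  · intro h0
    rw [main] at h0
    have n1 := real_inner_self_nonneg (x := P1 w)
    have n2 := real_inner_self_nonneg (x := P2 w)
    have z1 : ⟪P1 w, P1 w⟫ = 0 := by nlinarith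
    have z2 : ⟪P2 w, P2 w⟫ = 0 := by nlinarith
    have p1 : P1 w = 0 := by rwa [inner_self_eq_zero] at z1
    have p2 : P2 w = 0 := by rwa [inner_self_eq_zero] at z2
    rw [show A.mul c w = T w from rfl, hdecomp, p1, p2, smul_zero, add_zero]


end EJA

/-- Jordan powers of `X`. -/
def EJA.pw (A : EJA J) (X : J) : ℕ → J
  | 0 => A.one
  | n + 1 => A.mul X (EJA.pw A X n)

namespace EJA
variable (A : EJA J)

theorem pw_zero (X : J) : A.pw X 0 = A.one := rfl

theorem pw_succ (X : J) (n : ℕ) : A.pw X (n + 1) = A.mul X (A.pw X n) := rfl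

theorem pw_two (X : J) : A.pw X 2 = A.mul X X := by
  show A.mul X (A.mul X A.one) = A.mul X X
  rw [A.mul_one]

theorem sq_mul_pw (X : J) : ∀ n, A.mul (A.mul X X) (A.pw X n) = A.pw X (n + 2)
  | 0 => by
      show A.mul (A.mul X X) A.one = _
      rw [A.mul_one, ← A.pw_two]
  | n + 1 => by
      calc A.mul (A.mul X X) (A.pw X (n + 1))
          = A.mul (A.mul X (A.pw X n)) (A.mul X X) := by
            rw [A.comm]; rfl
        _ = A.mul X (A.mul (A.pw X n) (A.mul X X)) := A.jordan X (A.pw X n)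
        _ = A.mul X (A.mul (A.mul X X) (A.pw X n)) := by rw [A.comm (A.pw X n)]
        _ = A.mul X (A.pw X (n + 2)) := by rw [sq_mul_pw X n]
        _ = A.pw X (n + 3) := rfl

theorem pw_mul (X : J) : ∀ m n, A.mul (A.pw X m) (A.pw X n) = A.pw X (m + n) := by
  intro m
  induction m with
  | zero => intro n; rw [pw_zero, A.one_mul, Nat.zero_add]
  | succ m ih =>
    intro n
    induction n with
    | zero => rw [pw_zero, A.mul_one, Nat.add_zero]
    | succ n ihn =>
      have h := A.polar X (A.pw X m) (A.pw X n)
      rw [show A.mul X (A.pw X n) = A.pw X (n + 1) from rfl,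
        show A.mul X (A.pw X m) = A.pw X (m + 1) from rfl, ih n] at h
      rw [A.comm (A.pw X (m + n)) (A.mul X X), A.sq_mul_pw X (m + n)] at h
      rw [A.comm (A.pw X n) (A.pw X (m + 1)), ihn] at h
      rw [A.comm (A.pw X n) (A.mul X X), A.sq_mul_pw X n, ih (n + 2)] at h
      rw [show A.mul X (A.pw X (m + 1 + n)) = A.pw X (m + 1 + n + 1) from rfl] at h
      rw [show m + 1 + n + 1 = m + n + 2 from by omega,
        show m + (n + 2) = m + n + 2 from by omega] at h
      have h2 : (2:ℝ) • A.mul (A.pw X (n + 1)) (A.pw X (m + 1)) =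
          (2:ℝ) • A.pw X (m + n + 2) := by
        linear_combination (norm := module) h
      have h3 := smul_right_injective J (by norm_num : (2:ℝ) ≠ 0) h2
      rw [A.comm, h3, show m + 1 + (n + 1) = m + n + 2 from by omega]

end EJA
namespace EJA
variable (A : EJA J)

/-- Spectral square-root construction: if `X = w∘w` with `w` invertible, then there
are `y, z` in the span of powers of `X` with `y∘z = e`, `y∘y = X`, `y²∘z = y`. -/
theorem exists_good_sqrt (X w v : J) (hwv : A.mul w v = A.one)
    (hX : X = A.mul w w) :
    ∃ y z : J, y ∈ Submodule.span ℝ (Set.range (A.pw X)) ∧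
      z ∈ Submodule.span ℝ (Set.range (A.pw X)) ∧
      A.mul y z = A.one ∧ A.mul y y = X ∧ A.mul X z = y := by
  classical
  set R : Submodule ℝ J := Submodule.span ℝ (Set.range (A.pw X)) with hR
  set L : Module.End ℝ J := (A.mul X : J →ₗ[ℝ] J) with hL
  have hLsym : L.IsSymmetric := fun a b => A.assoc_inner X a b
  have htop : (⨆ μ : ℝ, Module.End.eigenspace L μ) = ⊤ := by
    rw [← Submodule.orthogonal_eq_bot_iff]
    exact hLsym.orthogonalComplement_iSup_eigenspaces_eq_bot
  have hone_mem : A.one ∈ ⨆ μ : ℝ, Module.End.eigenspace L μ := by rw [htop]; trivial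
  rw [Submodule.mem_iSup_iff_exists_dfinsupp'] at hone_mem
  obtain ⟨f, hf⟩ := hone_mem
  set S : Finset ℝ := f.support with hS
  set E : ℝ → J := fun μ => (f μ : J) with hE
  have hesum : ∑ μ ∈ S, E μ = A.one := hf
  have hEeig : ∀ μ, A.mul X (E μ) = μ • E μ := fun μ =>
    Module.End.mem_eigenspace_iff.mp (f μ).2
  have hpow_one : ∀ n : ℕ, (L ^ n) A.one = A.pw X n := by
    intro n
    induction n with
    | zero => rfl
    | succ n ih => rw [pow_succ', Module.End.mul_apply, ih]; rfl
  have haeval_mem : ∀ p : Polynomial ℝ, (Polynomial.aeval L p) A.one ∈ R := by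
    intro p
    induction p using Polynomial.induction_on' with
    | add p q hp hq => rw [map_add, LinearMap.add_apply]; exact R.add_mem hp hq
    | monomial n a =>
      have : (Polynomial.aeval L (Polynomial.monomial n a)) A.one = a • A.pw X n := by
        rw [Polynomial.aeval_monomial, Module.End.mul_apply, hpow_one,
          Module.algebraMap_end_apply]
      rw [this]
      exact R.smul_mem _ (Submodule.subset_span ⟨n, rfl⟩)
  have hEne : ∀ μ ∈ S, E μ ≠ 0 := by
    intro μ hμ h0
    exact (DFinsupp.mem_support_iff.mp hμ) (ZeroMemClass.coe_eq_zero.mp h0)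
  have hER : ∀ μ ∈ S, E μ ∈ R := by
    intro μ hμ
    have key : (Polynomial.aeval L (Lagrange.basis S id μ)) A.one = E μ := by
      rw [← hesum, map_sum]
      rw [Finset.sum_eq_single μ (fun ν hν hνμ => by
          rw [Module.End.aeval_apply_of_hasEigenvector ⟨(f ν).2, hEne ν hν⟩,
            show (Lagrange.basis S id μ).eval ν = 0 from
              Lagrange.eval_basis_of_ne (v := id) (fun h => hνμ (h.symm)) hν, zero_smul])
        (fun h' => absurd hμ h')]
      rw [Module.End.aeval_apply_of_hasEigenvector ⟨(f μ).2, hEne μ hμ⟩,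
        show (Lagrange.basis S id μ).eval μ = 1 from
          Lagrange.eval_basis_self (Set.injOn_id _) hμ, one_smul]
    rw [← key]; exact haeval_mem _
  have hRassoc : ∀ a ∈ R, ∀ b ∈ R, A.mul X (A.mul a b) = A.mul (A.mul X a) b := by
    intro a ha
    induction ha using Submodule.span_induction with
    | mem a' ha' =>
      obtain ⟨m, rfl⟩ := ha'
      intro b hb
      induction hb using Submodule.span_induction with
      | mem b' hb' =>
        obtain ⟨n, rfl⟩ := hb'
        rw [A.pw_mul, show A.mul X (A.pw X (m + n)) = A.pw X (m + n + 1) from rfl,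
          show A.mul X (A.pw X m) = A.pw X (m + 1) from rfl, A.pw_mul,
          show m + 1 + n = m + n + 1 from by omega]
      | zero => simp
      | add b₁ b₂ hb₁ hb₂ ih₁ ih₂ => simp only [map_add, ih₁, ih₂]
      | smul r b₁ hb₁ ih₁ => simp only [map_smul, ih₁]
    | zero => intro b hb; simp
    | add a₁ a₂ ha₁ ha₂ ih₁ ih₂ =>
      intro b hb
      simp only [map_add, LinearMap.add_apply, ih₁ b hb, ih₂ b hb]
    | smul r a₁ ha₁ ih₁ =>
      intro b hb
      simp only [map_smul, LinearMap.smul_apply, ih₁ b hb]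
  have hmulEE : ∀ μ ∈ S, ∀ ν ∈ S, μ ≠ ν → A.mul (E μ) (E ν) = 0 := by
    intro μ hμ ν hν hne
    have h1 : A.mul X (A.mul (E μ) (E ν)) = μ • A.mul (E μ) (E ν) := by
      rw [hRassoc _ (hER μ hμ) _ (hER ν hν), hEeig μ, map_smul, LinearMap.smul_apply]
    have h2 : A.mul X (A.mul (E μ) (E ν)) = ν • A.mul (E μ) (E ν) := by
      rw [A.comm (E μ) (E ν), hRassoc _ (hER ν hν) _ (hER μ hμ), hEeig ν, map_smul,
        LinearMap.smul_apply, A.comm (E ν) (E μ)]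
    have h3 : (μ - ν) • A.mul (E μ) (E ν) = 0 := by
      rw [sub_smul, ← h1, ← h2, sub_self]
    exact (smul_eq_zero.mp h3).resolve_left (sub_ne_zero.mpr hne)
  have hEidem : ∀ μ ∈ S, A.mul (E μ) (E μ) = E μ := by
    intro μ hμ
    have h := A.one_mul (E μ)
    rw [← hesum, map_sum, LinearMap.sum_apply] at h
    rw [Finset.sum_eq_single μ (fun ν hν hνμ => hmulEE ν hν μ hμ hνμ)
      (fun h' => absurd hμ h')] at h
    exact h
  have hpos : ∀ μ ∈ S, 0 < μ := by
    intro μ hμ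
    have hEn : (0:ℝ) < ⟪E μ, E μ⟫ := by
      rw [real_inner_self_eq_norm_sq]
      have := norm_pos_iff.mpr (hEne μ hμ)
      positivity
    have hid := hEidem μ hμ
    have w2 : ⟪X, E μ⟫ = μ * ⟪E μ, E μ⟫ := by
      calc ⟪X, E μ⟫ = ⟪A.mul (E μ) (E μ), X⟫ := by rw [hid, real_inner_comm]
        _ = ⟪E μ, A.mul (E μ) X⟫ := A.assoc_inner (E μ) (E μ) X
        _ = ⟪E μ, μ • E μ⟫ := by rw [A.comm (E μ) X, hEeig μ]
        _ = μ * ⟪E μ, E μ⟫ := real_inner_smul_right _ _ _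
    have w1 : ⟪X, E μ⟫ = ⟪A.mul (E μ) w, w⟫ := by
      rw [hX]
      calc ⟪A.mul w w, E μ⟫ = ⟪w, A.mul w (E μ)⟫ := A.assoc_inner w w (E μ)
        _ = ⟪w, A.mul (E μ) w⟫ := by rw [A.comm w (E μ)]
        _ = ⟪A.mul (E μ) w, w⟫ := real_inner_comm _ _
    have hnn := (A.inner_idem_nonneg (E μ) hid w).1
    have hge : 0 ≤ μ := by nlinarith
    rcases hge.eq_or_lt with h0 | h0
    · exfalso
      have hz : ⟪A.mul (E μ) w, w⟫ = 0 := by rw [← w1, w2, ← h0]; ring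
      have Ew0 : A.mul (E μ) w = 0 := (A.inner_idem_nonneg (E μ) hid w).2 hz
      have c1 : ⟪E μ, A.one⟫ = ⟪E μ, E μ⟫ := by
        have h := A.assoc_inner (E μ) (E μ) A.one
        rw [hid, A.mul_one] at h
        exact h
      have c2 : ⟪E μ, A.one⟫ = 0 := by
        rw [← hwv]
        calc ⟪E μ, A.mul w v⟫ = ⟪A.mul w v, E μ⟫ := real_inner_comm _ _
          _ = ⟪v, A.mul w (E μ)⟫ := A.assoc_inner w v (E μ)
          _ = ⟪v, A.mul (E μ) w⟫ := by rw [A.comm w (E μ)]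
          _ = 0 := by rw [Ew0, inner_zero_right]
      rw [c1] at c2
      exact hEn.ne' c2
    · exact h0
  have hprod : ∀ a b : ℝ → ℝ,
      A.mul (∑ μ ∈ S, a μ • E μ) (∑ μ ∈ S, b μ • E μ) =
        ∑ μ ∈ S, (a μ * b μ) • E μ := by
    intro a b
    have hsmulmul : ∀ (r s : ℝ) (u u' : J),
        A.mul (r • u) (s • u') = (r * s) • A.mul u u' := by
      intro r s u u'
      rw [map_smul, map_smul, LinearMap.smul_apply, smul_smul, mul_comm s r]
    calc A.mul (∑ μ ∈ S, a μ • E μ) (∑ μ ∈ S, b μ • E μ)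
        = ∑ ν ∈ S, A.mul (∑ μ ∈ S, a μ • E μ) (b ν • E ν) := map_sum _ _ _
      _ = ∑ ν ∈ S, ∑ μ ∈ S, A.mul (a μ • E μ) (b ν • E ν) := by
          refine Finset.sum_congr rfl fun ν hν => ?_
          rw [map_sum, LinearMap.sum_apply]
      _ = ∑ ν ∈ S, (a ν * b ν) • E ν := by
          refine Finset.sum_congr rfl fun ν hν => ?_
          rw [Finset.sum_eq_single ν
            (fun μ hμ hμν => by rw [hsmulmul, hmulEE μ hμ ν hν hμν, smul_zero])
            (fun h' => absurd hν h'), hsmulmul, hEidem ν hν]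
  have hXsum : X = ∑ μ ∈ S, μ • E μ := by
    conv_lhs => rw [← A.mul_one X, ← hesum]
    rw [map_sum]
    exact Finset.sum_congr rfl fun μ _ => hEeig μ
  refine ⟨∑ μ ∈ S, Real.sqrt μ • E μ, ∑ μ ∈ S, (Real.sqrt μ)⁻¹ • E μ,
    Submodule.sum_mem _ fun μ hμ => R.smul_mem _ (hER μ hμ),
    Submodule.sum_mem _ fun μ hμ => R.smul_mem _ (hER μ hμ), ?_, ?_, ?_⟩
  · rw [hprod, ← hesum]
    refine Finset.sum_congr rfl fun μ hμ => ?_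
    rw [mul_inv_cancel₀ (Real.sqrt_ne_zero'.mpr (hpos μ hμ)), one_smul]
  · rw [hprod, hXsum]
    refine Finset.sum_congr rfl fun μ hμ => ?_
    rw [Real.mul_self_sqrt (hpos μ hμ).le]
  · rw [map_sum]
    refine Finset.sum_congr rfl fun μ hμ => ?_
    rw [map_smul, hEeig μ, smul_smul]
    congr 1
    rw [inv_mul_eq_div, div_eq_iff (Real.sqrt_ne_zero'.mpr (hpos μ hμ))]
    exact (Real.mul_self_sqrt (hpos μ hμ).le).symm

end EJA

/-- For `x_j ∈ J_j`, the sum `x₁ + ⋯ + x_k` lies in `Ω` iff each `x_j` lies in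
the symmetric cone `Ω_j` of `J_j` (squares of elements of `J_j` invertible in
`J_j`, whose unit is `c_j`). -/
theorem stmt6 (A : EJA J) (k : ℕ) (c : Fin k → J) (hc : A.IsCSOI c)
    (x : Fin k → J) (hx : ∀ j, x j ∈ A.peirce (c j) 1) :
    (∑ j, x j) ∈ A.cone ↔
      ∀ j, ∃ y ∈ A.peirce (c j) 1,
        (∃ z ∈ A.peirce (c j) 1, A.mul y z = c j ∧ A.mul (A.mul y y) z = y) ∧
        x j = A.mul y y := by
  classical
  obtain ⟨hidem, horth, hsum⟩ := hc
  have hx1 : ∀ j, A.mul (c j) (x j) = x j := fun j => by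
    have := Module.End.mem_eigenspace_iff.mp (hx j)
    rwa [one_smul] at this
  have P1 : ∀ i j, i ≠ j → ∀ a : J, A.mul (c j) a = a → A.mul (c i) a = 0 :=
    fun i j hij a ha =>
      A.mul_orth_zero (c j) (c i) a (hidem j) (hidem i) (horth j i (Ne.symm hij)) ha
  have cross : ∀ f g : Fin k → J, (∀ j, A.mul (c j) (f j) = f j) →
      (∀ j, A.mul (c j) (g j) = g j) →
      A.mul (∑ j, f j) (∑ j, g j) = ∑ j, A.mul (f j) (g j) := by
    intro f g hf hg
    have hzero : ∀ i j, i ≠ j → A.mul (f i) (g j) = 0 := fun i j hij =>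
      A.mul_one_zero (c i) (f i) (g j) (hidem i) (hf i) (P1 i j hij (g j) (hg j))
    calc A.mul (∑ j, f j) (∑ j, g j)
        = ∑ j, A.mul (∑ i, f i) (g j) := map_sum _ _ _
      _ = ∑ j, ∑ i, A.mul (f i) (g j) := Finset.sum_congr rfl fun j _ => by
          rw [map_sum, LinearMap.sum_apply]
      _ = ∑ j, A.mul (f j) (g j) := Finset.sum_congr rfl fun j _ =>
          Finset.sum_eq_single j (fun i _ hij => hzero i j hij)
            (fun hj => absurd (Finset.mem_univ j) hj)
  constructor
  · rintro ⟨w, v, ⟨hwv, -⟩, hXw⟩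
    obtain ⟨y, z, hyR, hzR, hyz, hyy, hXz⟩ :=
      A.exists_good_sqrt (A.mul w w) w v hwv rfl
    set X := A.mul w w with hXdef
    have hcjX : ∀ j, A.mul (c j) X = x j := by
      intro j
      rw [← hXw, map_sum, Finset.sum_eq_single j
        (fun l _ hlj => P1 j l (Ne.symm hlj) (x l) (hx1 l))
        (fun hj => absurd (Finset.mem_univ j) hj)]
      exact hx1 j
    set D : J → Prop := fun a => ∀ j, A.mul (c j) (A.mul (c j) a) = A.mul (c j) a
      with hD
    have hDone : D A.one := fun j => by
      rw [A.mul_one (c j)]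
      exact hidem j
    have hDX : D X := fun j => by
      rw [hcjX j]
      exact hx1 j
    have hdecD : ∀ a : J, a = ∑ j, A.mul (c j) a := by
      intro a
      calc a = A.mul A.one a := (A.one_mul a).symm
        _ = A.mul (∑ j, c j) a := by rw [hsum]
        _ = ∑ j, A.mul (c j) a := by rw [map_sum, LinearMap.sum_apply]
    have hDmul : ∀ a b : J, D a → D b → ∀ j,
        A.mul (c j) (A.mul a b) = A.mul (A.mul (c j) a) (A.mul (c j) b) := by
      intro a b ha hb j
      have hab : A.mul a b = ∑ l, A.mul (A.mul (c l) a) (A.mul (c l) b) := by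
        conv_lhs => rw [hdecD a, hdecD b]
        exact cross _ _ (fun l => ha l) (fun l => hb l)
      rw [hab, map_sum, Finset.sum_eq_single j (fun l _ hlj =>
          P1 j l (Ne.symm hlj) _ (A.mul_mem_one (c l) _ _ (hidem l) (ha l) (hb l)))
        (fun hj => absurd (Finset.mem_univ j) hj),
        A.mul_mem_one (c j) _ _ (hidem j) (ha j) (hb j)]
    have hDmulD : ∀ a b : J, D a → D b → D (A.mul a b) := by
      intro a b ha hb j
      rw [hDmul a b ha hb j]
      exact A.mul_mem_one (c j) _ _ (hidem j) (ha j) (hb j)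
    have hDpw : ∀ n, D (A.pw X n) := by
      intro n
      induction n with
      | zero => exact hDone
      | succ n ih => exact hDmulD X (A.pw X n) hDX ih
    have hDR : ∀ a, a ∈ Submodule.span ℝ (Set.range (A.pw X)) → D a := by
      intro a ha
      induction ha using Submodule.span_induction with
      | mem a' ha' => obtain ⟨n, rfl⟩ := ha'; exact hDpw n
      | zero => intro j; simp
      | add a₁ a₂ h₁ h₂ ih₁ ih₂ => intro j; simp only [map_add, ih₁ j, ih₂ j]
      | smul r a₁ h₁ ih₁ => intro j; simp only [map_smul, ih₁ j]
    have hDy := hDR y hyR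
    have hDz := hDR z hzR
    intro j
    refine ⟨A.mul (c j) y, ?_, ⟨A.mul (c j) z, ?_, ?_, ?_⟩, ?_⟩
    · exact Module.End.mem_eigenspace_iff.mpr (by rw [one_smul]; exact hDy j)
    · exact Module.End.mem_eigenspace_iff.mpr (by rw [one_smul]; exact hDz j)
    · rw [← hDmul y z hDy hDz j, hyz, A.mul_one]
    · have h1 : A.mul (A.mul (c j) y) (A.mul (c j) y) = A.mul (c j) X := by
        rw [← hDmul y y hDy hDy j, hyy]
      rw [h1, ← hDmul X z hDX hDz j, hXz]
    · rw [← hDmul y y hDy hDy j, hyy, hcjX j]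
  · intro h
    choose y hyP hrest using h
    have hxy : ∀ j, x j = A.mul (y j) (y j) := fun j => (hrest j).2
    choose z hzP hyz hyyz using fun j => (hrest j).1
    have hy1 : ∀ j, A.mul (c j) (y j) = y j := fun j => by
      have := Module.End.mem_eigenspace_iff.mp (hyP j); rwa [one_smul] at this
    have hz1 : ∀ j, A.mul (c j) (z j) = z j := fun j => by
      have := Module.End.mem_eigenspace_iff.mp (hzP j); rwa [one_smul] at this
    have hyy1 : ∀ j, A.mul (c j) (A.mul (y j) (y j)) = A.mul (y j) (y j) := fun j =>
      A.mul_mem_one (c j) _ _ (hidem j) (hy1 j) (hy1 j)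
    refine ⟨∑ j, y j, ∑ j, z j, ⟨?_, ?_⟩, ?_⟩
    · rw [cross y z hy1 hz1, ← hsum]
      exact Finset.sum_congr rfl fun j _ => hyz j
    · rw [cross y y hy1 hy1, cross (fun j => A.mul (y j) (y j)) z hyy1 hz1]
      exact Finset.sum_congr rfl fun j _ => hyyz j
    · rw [cross y y hy1 hy1]
      exact Finset.sum_congr rfl fun j _ => hxy j
end
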